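/- Let ψ_e be the Gerstewitz function with Lipschitz constant L, let A₁, …, A_w : ℝ^n → ℝ^m be linear maps with ‖A_j‖ ≤ C for all j, and let B₁, …, B_w be bilinear/quadratic maps with all eigen-bounds at most γ, i.e., ‖uᵀB_j u‖ ≤ γ‖u‖². Suppose ρ > 0 and for all j, uᵀB_j u - ρ‖u‖² e ∈ K for all u. If u* ∈ ℝ^n satisfies ψ_e(A_j u* + (1/2)(u*)ᵀB_j u*) < 0 for all j ∈ [w], then ‖u*‖ ≤ 2CL/ρ. -/

import Mathlib

open Set

noncomputable def psi {m : ℕ} (K : Set (EuclideanSpace ℝ (Fin m)))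
    (e z : EuclideanSpace ℝ (Fin m)) : ℝ :=
  sInf {t : ℝ | t • e - z ∈ K}

theorem newton_direction_bounded {n m w : ℕ} (hw : 0 < w)
    (K : Set (EuclideanSpace ℝ (Fin m)))
    (e : EuclideanSpace ℝ (Fin m))
    (hcl : IsClosed K) (hconv : Convex ℝ K)
    (hadd : ∀ x ∈ K, ∀ y ∈ K, x + y ∈ K)
    (hsmul : ∀ (c : ℝ), 0 ≤ c → ∀ x ∈ K, c • x ∈ K)
    (hpointed : K ∩ (-K) = {0})
    (he : e ∈ interior K)
    (L : ℝ) (hL : 0 < L)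
    (hLip : ∀ y z : EuclideanSpace ℝ (Fin m), |psi K e y - psi K e z| ≤ L * ‖y - z‖)
    (A : Fin w → (EuclideanSpace ℝ (Fin n) →L[ℝ] EuclideanSpace ℝ (Fin m)))
    (C : ℝ) (hC : ∀ j, ‖A j‖ ≤ C)
    (B : Fin w → EuclideanSpace ℝ (Fin n) → EuclideanSpace ℝ (Fin m))
    (γ : ℝ) (hγ : ∀ j u, ‖B j u‖ ≤ γ * ‖u‖ ^ 2)
    (ρ : ℝ) (hρ : 0 < ρ)
    (hstrong : ∀ j u, B j u - (ρ * ‖u‖ ^ 2) • e ∈ K)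
    (ustar : EuclideanSpace ℝ (Fin n))
    (hneg : ∀ j : Fin w, psi K e (A j ustar + (1 / 2 : ℝ) • B j ustar) < 0) :
    ‖ustar‖ ≤ 2 * C * L / ρ := by
  set u := ustar with hu
  obtain ⟨j⟩ : Nonempty (Fin w) := ⟨⟨0, hw⟩⟩
  -- case e = 0
  by_cases he0 : e = 0
  · exfalso
    have h0 : psi K e (A j u + (1 / 2 : ℝ) • B j u) = 0 := by
      unfold psi
      have hset : {t : ℝ | t • e - (A j u + (1 / 2 : ℝ) • B j u) ∈ K}
          = {t : ℝ | -(A j u + (1 / 2 : ℝ) • B j u) ∈ K} := by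
        ext t
        rw [Set.mem_setOf_eq, Set.mem_setOf_eq, he0, smul_zero, zero_sub]
      rw [hset]
      by_cases hmem : -(A j u + (1 / 2 : ℝ) • B j u) ∈ K
      · have huniv : {t : ℝ | -(A j u + (1 / 2 : ℝ) • B j u) ∈ K} = Set.univ := by
          ext t; simpa using hmem
        rw [huniv]
        exact Real.sInf_of_not_bddBelow not_bddBelow_univ
      · have hemp : {t : ℝ | -(A j u + (1 / 2 : ℝ) • B j u) ∈ K} = (∅ : Set ℝ) := by
          ext t; simpa using hmem
        rw [hemp]
        exact Real.sInf_empty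
    have := hneg j
    rw [h0] at this
    exact lt_irrefl 0 this
  · have heK : e ∈ K := interior_subset he
    have hene : -e ∉ K := by
      intro h
      have : e ∈ K ∩ (-K) := ⟨heK, by simpa using h⟩
      rw [hpointed] at this
      exact he0 (by simpa using this)
    -- every section set is bounded below
    have hbdd : ∀ z : EuclideanSpace ℝ (Fin m), BddBelow {t : ℝ | t • e - z ∈ K} := by
      intro z
      by_contra hnb
      -- then the set is all of ℝ
      have hall : ∀ s : ℝ, s • e - z ∈ K := by
        intro s
        rw [not_bddBelow_iff] at hnb
        obtain ⟨t, ht, hts⟩ := hnb s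
        have h1 : (s - t) • e ∈ K := hsmul _ (by linarith) e heK
        have := hadd _ ht _ h1
        have heq : t • e - z + (s - t) • e = s • e - z := by
          rw [sub_smul]; abel
        rwa [heq] at this
      -- take limits to get -e ∈ K
      have hmem : ∀ k : ℕ, -e - (((k : ℝ) + 1)⁻¹) • z ∈ K := by
        intro k
        have hk : (0:ℝ) < (k : ℝ) + 1 := by positivity
        have := hsmul (((k : ℝ) + 1)⁻¹) (by positivity) _ (hall (-((k : ℝ) + 1)))
        have heq : (((k : ℝ) + 1)⁻¹) • ((-((k : ℝ) + 1)) • e - z)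
            = -e - (((k : ℝ) + 1)⁻¹) • z := by
          rw [smul_sub, smul_smul]
          congr 1
          have : (((k : ℝ) + 1)⁻¹ * -((k : ℝ) + 1)) = -1 := by
            field_simp
          rw [this, neg_one_smul]
        rwa [heq] at this
      have htend : Filter.Tendsto (fun k : ℕ => -e - (((k : ℝ) + 1)⁻¹) • z)
          Filter.atTop (nhds (-e)) := by
        have h1 : Filter.Tendsto (fun k : ℕ => (((k : ℝ) + 1)⁻¹)) Filter.atTop (nhds 0) :=
          tendsto_one_div_add_atTop_nhds_zero_nat.congr (by intro k; rw [one_div])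
        have h2 := h1.smul_const z
        rw [zero_smul] at h2
        have := Filter.Tendsto.sub (tendsto_const_nhds (x := -e)) h2
        simpa using this
      exact hene (hcl.mem_of_tendsto htend (Filter.Eventually.of_forall hmem))
    -- every section set is nonempty
    have hne : ∀ z : EuclideanSpace ℝ (Fin m), Set.Nonempty {t : ℝ | t • e - z ∈ K} := by
      intro z
      obtain ⟨ε, hε, hball⟩ := Metric.isOpen_iff.mp isOpen_interior e he
      set t : ℝ := ‖z‖ / ε + 1 with ht
      have htpos : 0 < t := by positivity
      have hlt : ‖z‖ / t < ε := by
        rw [div_lt_iff₀ htpos]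
        have : ‖z‖ / ε < t := by rw [ht]; linarith
        calc ‖z‖ = (‖z‖ / ε) * ε := by field_simp
        _ < t * ε := by exact mul_lt_mul_of_pos_right this hε
        _ = ε * t := by ring
      have hmem : e - t⁻¹ • z ∈ interior K := by
        apply hball
        rw [Metric.mem_ball, dist_eq_norm]
        have : e - t⁻¹ • z - e = -(t⁻¹ • z) := by abel
        rw [this, norm_neg, norm_smul, norm_inv, Real.norm_eq_abs, abs_of_pos htpos]
        calc t⁻¹ * ‖z‖ = ‖z‖ / t := by rw [inv_mul_eq_div]
        _ < ε := hlt
      refine ⟨t, ?_⟩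
      have := hsmul t htpos.le _ (interior_subset hmem)
      have heq : t • (e - t⁻¹ • z) = t • e - z := by
        rw [smul_sub, smul_smul, mul_inv_cancel₀ (ne_of_gt htpos), one_smul]
      rwa [heq] at this
    -- monotonicity
    have hmono : ∀ y z : EuclideanSpace ℝ (Fin m), y - z ∈ K → psi K e z ≤ psi K e y := by
      intro y z hyz
      apply csInf_le_csInf (hbdd z) (hne y)
      intro s hs
      have := hadd _ hs _ hyz
      have heq : s • e - y + (y - z) = s • e - z := by abel
      rwa [heq] at this
    -- translation lower bound
    have htrans : ∀ (z : EuclideanSpace ℝ (Fin m)) (c : ℝ),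
        psi K e z + c ≤ psi K e (z + c • e) := by
      intro z c
      apply le_csInf (hne (z + c • e))
      intro s hs
      have hmem : (s - c) • e - z ∈ K := by
        have heq : (s - c) • e - z = s • e - (z + c • e) := by
          rw [sub_smul]; abel
        rw [heq]; exact hs
      have := csInf_le (hbdd z) hmem
      unfold psi
      linarith
    -- psi 0 ≥ 0
    have hpsi0 : 0 ≤ psi K e 0 := by
      apply Real.sInf_nonneg
      intro t ht
      simp only [Set.mem_setOf_eq, sub_zero] at ht
      by_contra hlt
      push_neg at hlt
      have hpos : 0 < -t := by linarith
      have := hsmul (-t)⁻¹ (by positivity) _ ht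
      rw [smul_smul] at this
      have heq : (-t)⁻¹ * t = -1 := by rw [inv_neg, neg_mul, inv_mul_cancel₀ hlt.ne]
      rw [heq, neg_one_smul] at this
      exact hene this
    -- main chain
    have hK2 : (1 / 2 : ℝ) • (B j u - (ρ * ‖u‖ ^ 2) • e) ∈ K :=
      hsmul _ (by norm_num) _ (hstrong j u)
    have hsub : (A j u + (1 / 2 : ℝ) • B j u) - (A j u + (ρ * ‖u‖ ^ 2 / 2) • e) ∈ K := by
      have heq : (A j u + (1 / 2 : ℝ) • B j u) - (A j u + (ρ * ‖u‖ ^ 2 / 2) • e)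
          = (1 / 2 : ℝ) • (B j u - (ρ * ‖u‖ ^ 2) • e) := by
        rw [smul_sub, smul_smul]
        have : (1 / 2 : ℝ) * (ρ * ‖u‖ ^ 2) = ρ * ‖u‖ ^ 2 / 2 := by ring
        rw [this]
        abel
      rw [heq]; exact hK2
    have h1 : psi K e (A j u + (ρ * ‖u‖ ^ 2 / 2) • e)
        ≤ psi K e (A j u + (1 / 2 : ℝ) • B j u) := hmono _ _ hsub
    have h2 : psi K e (A j u) + ρ * ‖u‖ ^ 2 / 2
        ≤ psi K e (A j u + (ρ * ‖u‖ ^ 2 / 2) • e) := htrans _ _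
    have h3 := hneg j
    have h4 : psi K e (A j u) < -(ρ * ‖u‖ ^ 2 / 2) := by linarith
    -- Lipschitz lower bound on psi (A j u)
    have h5 := hLip (A j u) 0
    rw [sub_zero] at h5
    have hAu : ‖A j u‖ ≤ C * ‖u‖ := by
      calc ‖A j u‖ ≤ ‖A j‖ * ‖u‖ := (A j).le_opNorm u
      _ ≤ C * ‖u‖ := mul_le_mul_of_nonneg_right (hC j) (norm_nonneg u)
    have h6 : -(L * (C * ‖u‖)) ≤ psi K e (A j u) := by
      have habs : |psi K e (A j u) - psi K e 0| ≤ L * (C * ‖u‖) :=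
        h5.trans (mul_le_mul_of_nonneg_left hAu hL.le)
      have := abs_le.mp habs
      linarith [this.1]
    have hmain : ρ * ‖u‖ ^ 2 / 2 < L * (C * ‖u‖) := by linarith
    have hC0 : 0 ≤ C := (norm_nonneg (A j)).trans (hC j)
    by_cases hu0 : ‖u‖ = 0
    · rw [hu0]; positivity
    · have hupos : 0 < ‖u‖ := lt_of_le_of_ne (norm_nonneg u) (Ne.symm hu0)
      rw [le_div_iff₀ hρ]
      nlinarith
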